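/- Suppose N > 0 and there exist positive semidefinite infinite matrices Γ' and Δ' such that N − δ_{ij} = Γ'_{ij}(1 − conj(λ_i¹)λ_j¹) + Δ'_{ij}(1 − conj(λ_i²)λ_j²) for all i, j, where {λ_i} is a sequence in 𝔻². Then for every admissible kernel k on 𝔻², the normalized Gram matrix G^k satisfies N·G^k ≥ I (i.e., N·G^k_{ij} − δ_{ij} is a positive semidefinite matrix). -/

import Mathlib

open scoped ComplexConjugate ComplexOrder

/-- The open bidisk in `ℂ²`. -/
def Bidisk : Set (ℂ × ℂ) := {z | ‖z.1‖ < 1 ∧ ‖z.2‖ < 1}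

/-- An infinite matrix is positive semidefinite if all its finite quadratic forms
are nonnegative. -/
def IsPSDMatrix (A : ℕ → ℕ → ℂ) : Prop :=
  ∀ (s : Finset ℕ) (c : ℕ → ℂ), 0 ≤ ∑ i ∈ s, ∑ j ∈ s, conj (c i) * c j * A i j

/-- A kernel on the bidisk is positive semidefinite. -/
def IsPSDKernel (k : (ℂ × ℂ) → (ℂ × ℂ) → ℂ) : Prop :=
  ∀ (n : ℕ) (p : Fin n → ℂ × ℂ), (∀ i, p i ∈ Bidisk) →
    ∀ c : Fin n → ℂ, 0 ≤ ∑ i, ∑ j, conj (c i) * c j * k (p i) (p j)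

/-- A kernel on the bidisk is admissible if it is positive semidefinite and multiplication
by each coordinate function is a contraction. -/
def IsAdmissibleKernel (k : (ℂ × ℂ) → (ℂ × ℂ) → ℂ) : Prop :=
  IsPSDKernel k ∧
  IsPSDKernel (fun l z => (1 - conj l.1 * z.1) * k l z) ∧
  IsPSDKernel (fun l z => (1 - conj l.2 * z.2) * k l z)

/-- Sum over a finset equals sum over the subtype. -/
lemma sum_coe_eq (s : Finset ℕ) (f : ℕ → ℂ) :
    ∑ i ∈ s, f i = ∑ a : {x // x ∈ s}, f a := by
  rw [Finset.univ_eq_attach, Finset.sum_attach]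

lemma sum_coe_eq₂ (s : Finset ℕ) (F : ℕ → ℕ → ℂ) :
    ∑ i ∈ s, ∑ j ∈ s, F i j = ∑ a : {x // x ∈ s}, ∑ b : {x // x ∈ s}, F a b := by
  rw [sum_coe_eq s (fun i => ∑ j ∈ s, F i j)]
  exact Finset.sum_congr rfl fun a _ => sum_coe_eq s (F a)

lemma isPSDMatrix_diag_im {A : ℕ → ℕ → ℂ} (hA : IsPSDMatrix A) (i : ℕ) :
    (A i i).im = 0 ∧ 0 ≤ (A i i).re := by
  have h := hA {i} (fun _ => 1)
  simp only [Finset.sum_singleton, map_one, one_mul] at h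
  rw [Complex.le_def] at h
  exact ⟨h.2.symm, by simpa using h.1⟩

lemma isPSDMatrix_conj {A : ℕ → ℕ → ℂ} (hA : IsPSDMatrix A) (i j : ℕ) :
    conj (A i j) = A j i := by
  rcases eq_or_ne i j with rfl | hij
  · have h := isPSDMatrix_diag_im hA i
    apply Complex.ext <;> simp [h.1]
  · have hii := isPSDMatrix_diag_im hA i
    have hjj := isPSDMatrix_diag_im hA j
    have key : ∀ w : ℂ, 0 ≤ A i i + conj w * A j i + w * A i j + conj w * w * A j j := by
      intro w
      have h := hA {i, j} (fun n => if n = i then 1 else if n = j then w else 0)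
      rw [Finset.sum_pair hij] at h
      rw [Finset.sum_pair hij, Finset.sum_pair hij] at h
      simp only [if_pos, if_neg hij, if_neg (Ne.symm hij)] at h
      convert h using 1
      simp only [map_one]
      ring
    have h1 := key 1
    have h2 := key Complex.I
    rw [Complex.le_def] at h1 h2
    have e1 : (A i j).im + (A j i).im = 0 := by
      have := h1.2.symm
      simp [Complex.add_im, hii.1, hjj.1] at this
      linarith
    have e2 : (A i j).re - (A j i).re = 0 := by
      have := h2.2.symm
      simp [Complex.add_im, Complex.mul_im, hii.1, hjj.1, Complex.conj_im, Complex.conj_re] at this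
      linarith
    apply Complex.ext
    · simp only [Complex.conj_re]; linarith
    · simp only [Complex.conj_im]; linarith

/-- Schur product: a PSD (infinite) matrix times a kernel PSD on `s` gives a
nonnegative quadratic form. -/
lemma schur_aux (A K : ℕ → ℕ → ℂ) (hA : IsPSDMatrix A) (s : Finset ℕ)
    (hK : ∀ c : ℕ → ℂ, 0 ≤ ∑ i ∈ s, ∑ j ∈ s, conj (c i) * c j * K i j)
    (d : ℕ → ℂ) :
    0 ≤ ∑ i ∈ s, ∑ j ∈ s, conj (d i) * d j * (A i j * K i j) := by
  classical
  set M : Matrix {x // x ∈ s} {x // x ∈ s} ℂ := fun a b => A a b with hM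
  have hMpsd : M.PosSemidef := by
    refine Matrix.posSemidef_iff_dotProduct_mulVec.mpr ⟨?_, ?_⟩
    · ext a b
      exact isPSDMatrix_conj hA b a
    · intro x
      have h := hA s (fun n => if h : n ∈ s then x ⟨n, h⟩ else 0)
      rw [sum_coe_eq₂] at h
      convert h using 1
      rw [dotProduct, Finset.sum_congr rfl fun a _ => ?_]
      rw [Matrix.mulVec, dotProduct]
      rw [Finset.mul_sum]
      refine Finset.sum_congr rfl fun b _ => ?_
      simp only [Pi.star_apply, RCLike.star_def, dif_pos a.2, dif_pos b.2, hM]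
      ring
  obtain ⟨B, hB⟩ : ∃ B : Matrix {x // x ∈ s} {x // x ∈ s} ℂ, M = B.conjTranspose * B := by
    open scoped MatrixOrder in
    exact CStarAlgebra.nonneg_iff_eq_star_mul_self.mp hMpsd.nonneg
  have hAij : ∀ a b : {x // x ∈ s}, A a b = ∑ r, conj (B r a) * B r b := by
    intro a b
    have h := congrFun (congrFun hB a) b
    rw [Matrix.mul_apply] at h
    simpa [Matrix.conjTranspose_apply, hM] using h
  rw [sum_coe_eq₂]
  have key : ∀ r, 0 ≤ ∑ a : {x // x ∈ s}, ∑ b : {x // x ∈ s},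
      conj (d a * B r a) * (d b * B r b) * K a b := by
    intro r
    have h := hK (fun n => if h : n ∈ s then d n * B r ⟨n, h⟩ else 0)
    rw [sum_coe_eq₂] at h
    convert h using 1
    refine Finset.sum_congr rfl fun a _ => Finset.sum_congr rfl fun b _ => ?_
    simp [dif_pos a.2, dif_pos b.2]
  calc (0:ℂ) ≤ ∑ r, ∑ a : {x // x ∈ s}, ∑ b : {x // x ∈ s},
        conj (d a * B r a) * (d b * B r b) * K a b :=
        Finset.sum_nonneg fun r _ => key r
    _ = ∑ a : {x // x ∈ s}, ∑ b : {x // x ∈ s}, conj (d a) * d b * (A a b * K a b) := by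
        rw [Finset.sum_comm]
        refine Finset.sum_congr rfl fun a _ => ?_
        rw [Finset.sum_comm]
        refine Finset.sum_congr rfl fun b _ => ?_
        rw [hAij a b, Finset.sum_mul, Finset.mul_sum]
        refine Finset.sum_congr rfl fun r _ => ?_
        simp only [map_mul]
        ring

lemma psdKernel_finset {K : (ℂ × ℂ) → (ℂ × ℂ) → ℂ} (hK : IsPSDKernel K)
    (p : ℕ → ℂ × ℂ) (hp : ∀ i, p i ∈ Bidisk) (s : Finset ℕ) (c : ℕ → ℂ) :
    0 ≤ ∑ i ∈ s, ∑ j ∈ s, conj (c i) * c j * K (p i) (p j) := by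
  classical
  let e := s.equivFin
  have h := hK s.card (fun m => p (e.symm m)) (fun m => hp _) (fun m => c (e.symm m))
  rw [sum_coe_eq₂]
  calc (0:ℂ) ≤ ∑ m, ∑ m', conj (c (e.symm m)) * c (e.symm m') *
        K (p (e.symm m)) (p (e.symm m')) := h
    _ = ∑ m, ∑ b : {x // x ∈ s}, conj (c (e.symm m)) * c b * K (p (e.symm m)) (p b) :=
        Finset.sum_congr rfl fun m _ =>
          Equiv.sum_comp e.symm (fun b : {x // x ∈ s} =>
            conj (c (e.symm m)) * c b * K (p (e.symm m)) (p b))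
    _ = ∑ a : {x // x ∈ s}, ∑ b : {x // x ∈ s}, conj (c a) * c b * K (p a) (p b) :=
        Equiv.sum_comp e.symm (fun a : {x // x ∈ s} => ∑ b : {x // x ∈ s},
          conj (c a) * c b * K (p a) (p b))

/-- Condition (b') implies condition (b): if `N − δ_{ij}` decomposes as
`Γ'_{ij}(1 − conj(λ_i¹)λ_j¹) + Δ'_{ij}(1 − conj(λ_i²)λ_j²)` with `Γ', Δ' ⪰ 0`, then for
every admissible kernel `k` the normalized Gram matrix satisfies `N·G^k ≥ I`. -/
theorem gram_lower_bound_of_decomposition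
    (l : ℕ → ℂ × ℂ) (hl : ∀ i, l i ∈ Bidisk) (N : ℝ) (hN : 0 < N)
    (Γ' Δ' : ℕ → ℕ → ℂ) (hΓ : IsPSDMatrix Γ') (hΔ : IsPSDMatrix Δ')
    (hdec : ∀ i j, (N : ℂ) - (if i = j then 1 else 0) =
      Γ' i j * (1 - conj (l i).1 * (l j).1) + Δ' i j * (1 - conj (l i).2 * (l j).2))
    (k : (ℂ × ℂ) → (ℂ × ℂ) → ℂ) (hk : IsAdmissibleKernel k)
    (hdiag : ∀ i, 0 < (k (l i) (l i)).re ∧ (k (l i) (l i)).im = 0) :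
    IsPSDMatrix (fun i j =>
      (N : ℂ) * (k (l i) (l j) /
          ((Real.sqrt ((k (l i) (l i)).re) * Real.sqrt ((k (l j) (l j)).re) : ℝ) : ℂ)) -
        (if i = j then 1 else 0)) := by
  intro s c
  classical
  set r : ℕ → ℝ := fun n => Real.sqrt ((k (l n) (l n)).re) with hr
  have hrpos : ∀ n, 0 < r n := fun n => Real.sqrt_pos.mpr (hdiag n).1
  have hrne : ∀ n, (r n : ℂ) ≠ 0 := fun n => by
    exact_mod_cast Complex.ofReal_ne_zero.mpr (ne_of_gt (hrpos n))
  have hkreal : ∀ n, k (l n) (l n) = ((r n * r n : ℝ) : ℂ) := by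
    intro n
    rw [Real.mul_self_sqrt (le_of_lt (hdiag n).1)]
    apply Complex.ext
    · simp
    · simp [(hdiag n).2]
  set d : ℕ → ℂ := fun n => c n / (r n : ℂ) with hd
  have hterm : ∀ i j,
      conj (c i) * c j * ((N : ℂ) * (k (l i) (l j) / ((r i * r j : ℝ) : ℂ)) -
        (if i = j then 1 else 0)) =
      conj (d i) * d j * (((N : ℂ) - (if i = j then 1 else 0)) * k (l i) (l j)) := by
    intro i j
    rcases eq_or_ne i j with rfl | hij
    · simp only [if_pos rfl, hd, map_div₀, Complex.conj_ofReal]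
      rw [hkreal i]
      push_cast
      rw [div_self (mul_ne_zero (hrne i) (hrne i)), div_mul_div_comm,
        div_mul_eq_mul_div, mul_div_assoc, mul_div_assoc,
        div_self (mul_ne_zero (hrne i) (hrne i)), mul_one]
      ring
    · simp only [if_neg hij, hd, map_div₀, Complex.conj_ofReal, sub_zero]
      field_simp
      rw [Complex.ofReal_mul]
  calc (0:ℂ) ≤ ∑ i ∈ s, ∑ j ∈ s, conj (d i) * d j *
        (Γ' i j * ((1 - conj (l i).1 * (l j).1) * k (l i) (l j))) +
        ∑ i ∈ s, ∑ j ∈ s, conj (d i) * d j *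
        (Δ' i j * ((1 - conj (l i).2 * (l j).2) * k (l i) (l j))) := by
        refine add_nonneg ?_ ?_
        · exact schur_aux Γ' _ hΓ s
            (fun c' => psdKernel_finset hk.2.1 l hl s c') d
        · exact schur_aux Δ' _ hΔ s
            (fun c' => psdKernel_finset hk.2.2 l hl s c') d
    _ = ∑ i ∈ s, ∑ j ∈ s, conj (c i) * c j *
        ((N : ℂ) * (k (l i) (l j) / ((r i * r j : ℝ) : ℂ)) - (if i = j then 1 else 0)) := by
        rw [← Finset.sum_add_distrib]
        refine Finset.sum_congr rfl fun i _ => ?_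
        rw [← Finset.sum_add_distrib]
        refine Finset.sum_congr rfl fun j _ => ?_
        rw [hterm i j, hdec i j]
        ring
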